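/- Mehler's formula: for real x, y and |a| < 1, Σ_{n=0}^∞ H_n(x) H_n(y) aⁿ / (2ⁿ n!) = (1 − a²)^{-1/2} exp( (2xya − (x² + y²)a²) / (1 − a²) ), where H_n are the physicists' Hermite polynomials. -/

import Mathlib

open MeasureTheory Real Complex Filter Polynomial Finset

open Polynomial

/-- The physicists' Hermite polynomials, defined by the recurrence
`H_0 = 1`, `H_{n+1}(x) = 2x H_n(x) - H_n'(x)`
(equivalent to `H_n(x) = (-1)^n e^{x²} dⁿ/dxⁿ e^{-x²}`). -/
noncomputable def hermiteP : ℕ → Polynomial ℝ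
  | 0 => 1
  | n + 1 => 2 * Polynomial.X * hermiteP n - Polynomial.derivative (hermiteP n)

lemma derivative_hermiteP (n : ℕ) :
    derivative (hermiteP n) = 2 * (n : Polynomial ℝ) * hermiteP (n - 1) := by
  induction n with
  | zero => simp [hermiteP]
  | succ n ih =>
    match n, ih with
    | 0, _ => simp [hermiteP]
    | (m+1), ih =>
      rw [show m + 1 + 1 = m + 2 from rfl, hermiteP, derivative_sub, derivative_mul,
        derivative_mul, ih]
      have h1 : hermiteP (m + 1 + 1 - 1) = hermiteP (m + 1) := rfl
      have h2 : hermiteP (m + 1) = 2 * X * hermiteP m - derivative (hermiteP m) := rfl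
      rw [h1]
      rw [show (m + 1 - 1) = m from rfl] at ih ⊢
      rw [derivative_mul, derivative_mul]
      push_cast
      rw [h2]
      ring_nf
      simp [derivative_ofNat]
      ring

lemma hermiteP_eval_rec (n : ℕ) (t : ℝ) :
    (hermiteP (n + 1)).eval t
      = 2 * t * (hermiteP n).eval t - 2 * n * (hermiteP (n - 1)).eval t := by
  rw [show hermiteP (n+1) = 2 * X * hermiteP n - derivative (hermiteP n) from rfl,
    derivative_hermiteP]
  simp

/-- master integrability: `exp (c * |t| - t^2)` is integrable. -/
lemma integrable_exp_abs_sub_sq (c : ℝ) :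
    Integrable fun t : ℝ => rexp (c * |t| - t ^ 2) := by
  have h : ∀ t : ℝ, rexp (c * |t| - t ^ 2) ≤ rexp (c ^ 2 / 2) * rexp (-(1/2) * t ^ 2) := by
    intro t
    rw [← Real.exp_add]
    apply Real.exp_le_exp.2
    nlinarith [sq_nonneg (|t| - c), _root_.sq_abs t]
  refine (Integrable.const_mul (integrable_exp_neg_mul_sq (b := 1/2) (by norm_num)) (rexp (c ^ 2 / 2))).mono' ?_ ?_
  · exact (Real.continuous_exp.comp ((continuous_const.mul _root_.continuous_abs).sub
      (continuous_pow 2))).aestronglyMeasurable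
  · filter_upwards with t
    rw [Real.norm_eq_abs, _root_.abs_of_nonneg (Real.exp_nonneg _)]
    exact h t

lemma norm_yti (y t : ℝ) : ‖(↑y + ↑t * I)‖ ≤ |y| + |t| := by
  refine (norm_add_le _ _).trans ?_
  simp

lemma norm_yti_pow (y t : ℝ) (n : ℕ) :
    ‖((↑y + ↑t * I) ^ n * (rexp (-t ^ 2) : ℂ))‖ ≤ (|y| + |t|) ^ n * rexp (-t ^ 2) := by
  rw [norm_mul, norm_pow, Complex.norm_real, Real.norm_eq_abs,
    _root_.abs_of_nonneg (Real.exp_nonneg _)]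
  exact mul_le_mul_of_nonneg_right (pow_le_pow_left₀ (norm_nonneg _) (norm_yti y t) n)
    (Real.exp_nonneg _)

lemma pow_le_exp_mul (u : ℝ) (hu : 0 ≤ u) (n : ℕ) : u ^ n ≤ rexp (n * u) := by
  calc u ^ n ≤ rexp u ^ n := by gcongr; exact (Real.add_one_le_exp u).trans' (by linarith)
  _ = rexp (n * u) := by rw [← Real.exp_nat_mul]

lemma integrable_g (y : ℝ) (n : ℕ) :
    Integrable fun t : ℝ => (↑y + ↑t * I) ^ n * (rexp (-t ^ 2) : ℂ) := by
  refine ((integrable_exp_abs_sub_sq n).const_mul (rexp (n * |y|))).mono' ?_ ?_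
  · apply Continuous.aestronglyMeasurable
    fun_prop
  · filter_upwards with t
    refine (norm_yti_pow y t n).trans ?_
    rw [← Real.exp_add]
    calc (|y| + |t|) ^ n * rexp (-t ^ 2) ≤ rexp (n * (|y| + |t|)) * rexp (-t ^ 2) := by
          gcongr
          exact pow_le_exp_mul _ (by positivity) n
    _ ≤ _ := by rw [← Real.exp_add]; apply Real.exp_le_exp.2; ring_nf; nlinarith [_root_.sq_abs t]

lemma tendsto_g (y : ℝ) (n : ℕ) {l : Filter ℝ} (hl : Tendsto (fun t : ℝ => |t|) l atTop) :
    Tendsto (fun t : ℝ => (↑y + ↑t * I) ^ n * (rexp (-t ^ 2) : ℂ)) l (nhds 0) := by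
  have key : Tendsto (fun u : ℝ => 2 ^ n * (u ^ n * rexp (-u))) atTop (nhds 0) := by
    simpa using (tendsto_pow_mul_exp_neg_atTop_nhds_zero n).const_mul (2 ^ n : ℝ)
  refine squeeze_zero_norm' (a := fun t => 2 ^ n * (|t| ^ n * rexp (-|t|))) ?_ (key.comp hl)
  · filter_upwards [hl.eventually_ge_atTop (max 1 |y|)] with t ht
    have h1 : (1:ℝ) ≤ |t| := le_trans (le_max_left _ _) ht
    have h2 : |y| ≤ |t| := le_trans (le_max_right _ _) ht
    refine (norm_yti_pow y t n).trans ?_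
    have : rexp (-t ^ 2) ≤ rexp (-|t|) := by
      apply Real.exp_le_exp.2
      nlinarith [_root_.sq_abs t]
    calc (|y| + |t|) ^ n * rexp (-t ^ 2) ≤ (2 * |t|) ^ n * rexp (-|t|) :=
          mul_le_mul (pow_le_pow_left₀ (by positivity) (by linarith) n) this
            (Real.exp_nonneg _) (by positivity)
    _ = 2 ^ n * (|t| ^ n * rexp (-|t|)) := by ring

/-- integral of a derivative over ℝ is zero. -/
lemma integral_deriv_zero (F F' : ℝ → ℂ) (hd : ∀ t, HasDerivAt F (F' t) t)
    (hi : Integrable F') (htop : Tendsto F atTop (nhds 0))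
    (hbot : Tendsto F atBot (nhds 0)) : ∫ t : ℝ, F' t = 0 := by
  rw [← intervalIntegral.integral_Iic_add_Ioi (b := (0:ℝ)) hi.integrableOn hi.integrableOn,
    MeasureTheory.integral_Iic_of_hasDerivAt_of_tendsto'
      (fun x _ => hd x) hi.integrableOn hbot,
    MeasureTheory.integral_Ioi_of_hasDerivAt_of_tendsto'
      (fun x _ => hd x) hi.integrableOn htop]
  ring

noncomputable def gI (y : ℝ) (n : ℕ) : ℂ :=
  ∫ t : ℝ, (↑y + ↑t * I) ^ n * (rexp (-t ^ 2) : ℂ)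

lemma hasDerivAt_base (y t : ℝ) :
    HasDerivAt (fun t : ℝ => (↑y + ↑t * I : ℂ)) I t := by
  simpa using ((Complex.ofRealCLM.hasDerivAt (x := t)).mul_const I).const_add (y : ℂ)

lemma hasDerivAt_gauss (t : ℝ) :
    HasDerivAt (fun t : ℝ => (rexp (-t ^ 2) : ℂ)) ((-2 * t : ℂ) * (rexp (-t ^ 2) : ℂ)) t := by
  have h : HasDerivAt (fun t : ℝ => rexp (-t ^ 2)) (rexp (-t ^ 2) * (-2 * t)) t := by
    have := ((hasDerivAt_pow 2 t).neg).exp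
    simpa using this.congr_deriv (by simp only [Pi.neg_apply]; ring)
  have h2 := h.ofReal_comp
  convert h2 using 1
  push_cast
  ring

lemma hasDerivAt_F (y : ℝ) (n : ℕ) (t : ℝ) :
    HasDerivAt (fun t : ℝ => (↑y + ↑t * I) ^ n * (rexp (-t ^ 2) : ℂ))
      ((n : ℂ) * (↑y + ↑t * I) ^ (n - 1) * I * (rexp (-t ^ 2) : ℂ)
        + (↑y + ↑t * I) ^ n * ((-2 * t : ℂ) * (rexp (-t ^ 2) : ℂ))) t := by
  have hp : HasDerivAt (fun t : ℝ => ((↑y + ↑t * I : ℂ)) ^ n)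
      ((n : ℂ) * (↑y + ↑t * I) ^ (n - 1) * I) t := by
    have := (hasDerivAt_pow n ((y:ℂ) + ↑t * I)).comp t (hasDerivAt_base y t)
    exact this
  have h1 := hp.mul (hasDerivAt_gauss t)
  exact h1

lemma t_mul_g (y t : ℝ) (n : ℕ) :
    (↑t : ℂ) * ((↑y + ↑t * I) ^ n * (rexp (-t ^ 2) : ℂ))
      = -I * ((↑y + ↑t * I) ^ (n+1) * (rexp (-t ^ 2) : ℂ))
        + I * ↑y * ((↑y + ↑t * I) ^ n * (rexp (-t ^ 2) : ℂ)) := by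
  have hI := Complex.I_sq
  generalize ((rexp (-t ^ 2) : ℝ) : ℂ) = E
  linear_combination ((t:ℂ) * (↑y + ↑t * I) ^ n * E) * hI

lemma gI_rec (y : ℝ) (n : ℕ) :
    (2:ℂ) * gI y (n+1) = 2 * y * gI y n - n * gI y (n - 1) := by
  have hF' : ∀ t : ℝ,
      ((n : ℂ) * (↑y + ↑t * I) ^ (n - 1) * I * (rexp (-t ^ 2) : ℂ)
        + (↑y + ↑t * I) ^ n * ((-2 * t : ℂ) * (rexp (-t ^ 2) : ℂ)))
      = (n : ℂ) * I * ((↑y + ↑t * I) ^ (n - 1) * (rexp (-t ^ 2) : ℂ))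
        + (2 * I) * ((↑y + ↑t * I) ^ (n+1) * (rexp (-t ^ 2) : ℂ))
        + (-2 * I * y) * ((↑y + ↑t * I) ^ n * (rexp (-t ^ 2) : ℂ)) := by
    intro t
    have h := t_mul_g y t n
    linear_combination (-2 : ℂ) * h
  have hint : Integrable (fun t : ℝ =>
      (n : ℂ) * I * ((↑y + ↑t * I) ^ (n - 1) * (rexp (-t ^ 2) : ℂ))
        + (2 * I) * ((↑y + ↑t * I) ^ (n+1) * (rexp (-t ^ 2) : ℂ))
        + (-2 * I * y) * ((↑y + ↑t * I) ^ n * (rexp (-t ^ 2) : ℂ))) :=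
    (((integrable_g y (n-1)).const_mul _).add ((integrable_g y (n+1)).const_mul _)).add
      ((integrable_g y n).const_mul _)
  have h0 : ∫ t : ℝ, ((n : ℂ) * I * ((↑y + ↑t * I) ^ (n - 1) * (rexp (-t ^ 2) : ℂ))
        + (2 * I) * ((↑y + ↑t * I) ^ (n+1) * (rexp (-t ^ 2) : ℂ))
        + (-2 * I * y) * ((↑y + ↑t * I) ^ n * (rexp (-t ^ 2) : ℂ))) = 0 := by
    rw [← integral_congr_ae (Filter.Eventually.of_forall hF')]
    exact integral_deriv_zero _ _ (hasDerivAt_F y n) (by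
        refine hint.congr (Filter.Eventually.of_forall fun t => (hF' t).symm))
      (tendsto_g y n tendsto_abs_atTop_atTop)
      (tendsto_g y n tendsto_abs_atBot_atTop)
  rw [integral_add, integral_add, integral_const_mul, integral_const_mul,
    integral_const_mul] at h0
  · have hA : (n : ℂ) * I * gI y (n-1) + 2 * I * gI y (n+1) + (-2 * I * y) * gI y n = 0 := h0
    have hI := Complex.I_sq
    linear_combination (-I) * hA + ((n:ℂ) * gI y (n-1) + 2 * gI y (n+1) - 2 * y * gI y n) * hI
  · exact (integrable_g y (n-1)).const_mul _
  · exact (integrable_g y (n+1)).const_mul _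
  · exact ((integrable_g y (n-1)).const_mul _).add ((integrable_g y (n+1)).const_mul _)
  · exact (integrable_g y n).const_mul _

lemma gI_zero (y : ℝ) : gI y 0 = (Real.sqrt π : ℂ) := by
  have : gI y 0 = ∫ t : ℝ, (rexp (-t ^ 2) : ℂ) := by
    simp [gI]
  rw [this]
  have h2 : (∫ t : ℝ, (rexp (-t ^ 2) : ℂ)) = ((∫ t : ℝ, rexp (-t ^ 2) : ℝ) : ℂ) :=
    integral_ofReal
  rw [h2]
  norm_cast
  have := integral_gaussian 1
  simpa using this

lemma gI_eq (y : ℝ) (n : ℕ) :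
    gI y n = (Real.sqrt π : ℂ) * ((hermiteP n).eval y : ℝ) / 2 ^ n := by
  induction n using Nat.strong_induction_on with
  | _ n ih =>
    match n with
    | 0 => simpa [hermiteP] using gI_zero y
    | 1 =>
      have h := gI_rec y 0
      simp at h
      rw [gI_zero y] at h
      have : gI y 1 = y * (Real.sqrt π : ℂ) := by linear_combination h / 2
      rw [this, show hermiteP 1 = 2 * X from by simp [hermiteP]]
      push_cast
      simp
      ring
    | (m+2) =>
      have h := gI_rec y (m+1)
      simp only [Nat.add_sub_cancel] at h
      rw [ih (m+1) (by omega), ih m (by omega)] at h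
      have he := hermiteP_eval_rec (m+1) y
      simp only [Nat.add_sub_cancel] at he
      rw [he]
      push_cast at h ⊢
      linear_combination h / 2

/-- integrability of `exp (d + c|t| - k t²)` for `k > 0` -/
lemma integrable_exp_abs_sub_sq' (d c k : ℝ) (hk : 0 < k) :
    Integrable fun t : ℝ => rexp (d + c * |t| - k * t ^ 2) := by
  have h : ∀ t : ℝ, rexp (d + c * |t| - k * t ^ 2)
      ≤ rexp (d + c ^ 2 / (2 * k)) * rexp (-(k/2) * t ^ 2) := by
    intro t
    rw [← Real.exp_add]
    apply Real.exp_le_exp.2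
    have h2 : 2 * k * (c * |t|) ≤ k ^ 2 * t ^ 2 + c ^ 2 := by
      nlinarith [sq_nonneg (k * |t| - c), _root_.sq_abs t]
    have hk2 : 0 < 2 * k := by linarith
    have h3 : c * |t| ≤ c ^ 2 / (2 * k) + k / 2 * t ^ 2 := by
      rw [← sub_nonneg]
      have he : c ^ 2 / (2 * k) + k / 2 * t ^ 2 - c * |t|
          = (k ^ 2 * t ^ 2 + c ^ 2 - 2 * k * (c * |t|)) / (2 * k) := by
        field_simp
        ring
      rw [he]
      exact div_nonneg (by linarith) (le_of_lt hk2)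
    linarith
  refine (Integrable.const_mul (integrable_exp_neg_mul_sq (b := k/2) (by linarith))
      (rexp (d + c ^ 2 / (2 * k)))).mono' ?_ ?_
  · exact (Real.continuous_exp.comp ((continuous_const.add
      (continuous_const.mul _root_.continuous_abs)).sub
      (continuous_const.mul (continuous_pow 2)))).aestronglyMeasurable
  · filter_upwards with t
    rw [Real.norm_eq_abs, _root_.abs_of_nonneg (Real.exp_nonneg _)]
    exact h t

lemma integrable_gR (c : ℝ) (n : ℕ) :
    Integrable fun t : ℝ => (|c| + |t|) ^ n * rexp (-t ^ 2) := by
  refine (integrable_exp_abs_sub_sq' (n * |c|) n 1 one_pos).mono' ?_ ?_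
  · exact (((continuous_const.add _root_.continuous_abs).pow n).mul
      (Real.continuous_exp.comp (continuous_pow 2).neg)).aestronglyMeasurable
  · filter_upwards with t
    rw [Real.norm_eq_abs, _root_.abs_of_nonneg (by positivity)]
    calc (|c| + |t|) ^ n * rexp (-t ^ 2)
        ≤ rexp (n * (|c| + |t|)) * rexp (-t ^ 2) := by
          gcongr
          exact pow_le_exp_mul _ (by positivity) n
      _ = rexp (n * |c| + n * |t| - 1 * t ^ 2) := by rw [← Real.exp_add]; congr 1; ring

/-- the absolute-value integral -/
noncomputable def AR (c : ℝ) (n : ℕ) : ℝ := ∫ t : ℝ, (|c| + |t|) ^ n * rexp (-t ^ 2)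

lemma AR_nonneg (c : ℝ) (n : ℕ) : 0 ≤ AR c n :=
  integral_nonneg fun t => by positivity

lemma norm_integral_g_le (y : ℝ) (n : ℕ) :
    ‖∫ t : ℝ, (↑y + ↑t * I) ^ n * (rexp (-t ^ 2) : ℂ)‖ ≤ AR y n :=
  (norm_integral_le_integral_norm _).trans
    (integral_mono (integrable_g y n).norm (integrable_gR y n) fun t => norm_yti_pow y t n)

/-- bound on Hermite values -/
lemma hermite_val_bound (x : ℝ) (n : ℕ) :
    |((hermiteP n).eval x)| ≤ 2 ^ n / Real.sqrt π * AR x n := by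
  have h := gI_eq x n
  have h2 : ‖gI x n‖ = Real.sqrt π * |((hermiteP n).eval x)| / 2 ^ n := by
    rw [h]
    rw [norm_div, norm_mul]
    simp [Complex.norm_real, _root_.abs_of_nonneg (Real.sqrt_nonneg π)]
  have h3 : ‖gI x n‖ ≤ AR x n := norm_integral_g_le x n
  rw [h2] at h3
  have hπ : 0 < Real.sqrt π := Real.sqrt_pos.2 pi_pos
  rw [div_le_iff₀ (by positivity)] at h3
  rw [div_mul_eq_mul_div, le_div_iff₀ hπ]
  calc |eval x (hermiteP n)| * Real.sqrt π = Real.sqrt π * |eval x (hermiteP n)| := by ring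
    _ ≤ AR x n * 2 ^ n := h3
    _ = 2 ^ n * AR x n := by ring

lemma cexp_hasSum (z : ℂ) : HasSum (fun n : ℕ => z ^ n / n.factorial) (Complex.exp z) := by
  rw [Complex.exp_eq_exp_ℂ]
  exact NormedSpace.expSeries_div_hasSum_exp z

lemma hermite_gen (x : ℝ) (w : ℂ) :
    HasSum (fun n : ℕ => ((hermiteP n).eval x : ℝ) * w ^ n / n.factorial)
      (Complex.exp (2 * x * w - w ^ 2)) := by
  set f : ℕ → ℝ → ℂ := fun n s =>
    (2 * w) ^ n / n.factorial * ((↑x + ↑s * I) ^ n * (rexp (-s ^ 2) : ℂ)) with hf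
  have hint : ∀ n, Integrable (f n) := fun n => (integrable_g x n).const_mul _
  -- bound on norms of integrals
  have hnorm : ∀ n : ℕ, (∫ s : ℝ, ‖f n s‖)
      ≤ (2 * ‖w‖) ^ n / n.factorial * AR x n := by
    intro n
    have : (2 * ‖w‖) ^ n / n.factorial * AR x n
        = ∫ s : ℝ, (2 * ‖w‖) ^ n / n.factorial * ((|x| + |s|) ^ n * rexp (-s ^ 2)) :=
      (integral_const_mul _ _).symm
    rw [this]
    refine integral_mono (hint n).norm ((integrable_gR x n).const_mul _) fun s => ?_
    have e1 : ‖f n s‖ = (2 * ‖w‖) ^ n / n.factorial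
        * ‖(↑x + ↑s * I) ^ n * (rexp (-s ^ 2) : ℂ)‖ := by
      simp [hf, norm_mul, norm_div, norm_pow, Complex.norm_natCast]
    rw [e1]
    exact mul_le_mul_of_nonneg_left (norm_yti_pow x s n) (by positivity)
  have hsum : Summable fun n : ℕ => ∫ s : ℝ, ‖f n s‖ := by
    refine summable_of_sum_range_le (c := ∫ s : ℝ, rexp (2 * ‖w‖ * (|x| + |s|) - s ^ 2))
      (fun n => integral_nonneg fun s => norm_nonneg _) fun N => ?_
    have hK : Integrable fun s : ℝ => rexp (2 * ‖w‖ * (|x| + |s|) - s ^ 2) := by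
      have := integrable_exp_abs_sub_sq' (2 * ‖w‖ * |x|) (2 * ‖w‖) 1 one_pos
      refine this.congr ?_
      filter_upwards with s
      congr 1
      ring
    calc ∑ n ∈ range N, ∫ s : ℝ, ‖f n s‖
        ≤ ∑ n ∈ range N, (2 * ‖w‖) ^ n / n.factorial * AR x n :=
          Finset.sum_le_sum fun i _ => hnorm i
      _ = ∫ s : ℝ, ∑ n ∈ range N,
            (2 * ‖w‖) ^ n / n.factorial * ((|x| + |s|) ^ n * rexp (-s ^ 2)) := by
          rw [integral_finset_sum _ fun i _ => (integrable_gR x i).const_mul _]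
          exact Finset.sum_congr rfl fun i _ => (integral_const_mul _ _).symm
      _ ≤ ∫ s : ℝ, rexp (2 * ‖w‖ * (|x| + |s|) - s ^ 2) := by
          refine integral_mono
            (integrable_finset_sum _ fun i _ => (integrable_gR x i).const_mul _) hK fun s => ?_
          have hps : ∀ n : ℕ, (2 * ‖w‖) ^ n / n.factorial * ((|x| + |s|) ^ n * rexp (-s ^ 2))
              = (2 * ‖w‖ * (|x| + |s|)) ^ n / n.factorial * rexp (-s ^ 2) := by
            intro n; simp only [mul_pow]; ring
          simp only [hps]
          rw [← Finset.sum_mul]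
          rw [show rexp (2 * ‖w‖ * (|x| + |s|) - s ^ 2)
              = rexp (2 * ‖w‖ * (|x| + |s|)) * rexp (-s ^ 2) from by rw [← Real.exp_add]; ring_nf]
          exact mul_le_mul_of_nonneg_right (Real.sum_le_exp_of_nonneg (by positivity) N)
            (Real.exp_nonneg _)
  have hs := hasSum_integral_of_summable_integral_norm hint hsum
  -- identify the terms
  have hfn : ∀ n : ℕ, (∫ s : ℝ, f n s)
      = (Real.sqrt π : ℂ) * (((hermiteP n).eval x : ℝ) * w ^ n / n.factorial) := by
    intro n
    rw [hf]
    simp only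
    rw [integral_const_mul]
    have : (∫ s : ℝ, (↑x + ↑s * I) ^ n * (rexp (-s ^ 2) : ℂ)) = gI x n := rfl
    rw [this, gI_eq x n, mul_pow]
    have h2 : ((2 : ℂ)) ^ n ≠ 0 := pow_ne_zero _ two_ne_zero
    have h3 : ((n.factorial : ℂ)) ≠ 0 := by
      exact_mod_cast Nat.cast_ne_zero.2 n.factorial_ne_zero
    field_simp
  -- identify the sum
  have hts : (∫ s : ℝ, ∑' n : ℕ, f n s)
      = (Real.sqrt π : ℂ) * Complex.exp (2 * x * w - w ^ 2) := by
    have hpt : ∀ s : ℝ, (∑' n : ℕ, f n s)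
        = Complex.exp (-1 * (s:ℂ) ^ 2 + (2 * w * I) * s + 2 * w * x) := by
      intro s
      have h1 := (cexp_hasSum (2 * w * (↑x + ↑s * I))).mul_right ((rexp (-s ^ 2) : ℝ) : ℂ)
      have h2 : ∀ n : ℕ, (2 * w * (↑x + ↑s * I)) ^ n / n.factorial * ((rexp (-s ^ 2) : ℝ) : ℂ)
          = f n s := by
        intro n
        rw [hf]
        simp only [mul_pow]
        ring
      have h3 : HasSum (fun n => f n s)
          (Complex.exp (2 * w * (↑x + ↑s * I)) * ((rexp (-s ^ 2) : ℝ) : ℂ)) := by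
        simpa only [h2] using h1
      rw [h3.tsum_eq, Complex.ofReal_exp, ← Complex.exp_add]
      congr 1
      push_cast
      ring
    rw [integral_congr_ae (Filter.Eventually.of_forall hpt),
      integral_cexp_quadratic (show (-1 : ℂ).re < 0 by norm_num) (2 * w * I) (2 * w * ↑x)]
    have hpre : ((π : ℂ) / -(-1)) ^ ((1:ℂ)/2) = ((Real.sqrt π : ℝ) : ℂ) := by
      rw [neg_neg, div_one, Real.sqrt_eq_rpow, Complex.ofReal_cpow pi_pos.le]
      norm_num
    rw [show ((1:ℂ)/2) = (1/2 : ℂ) from rfl] at hpre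
    rw [hpre]
    congr 1
    congr 1
    linear_combination (w ^ 2 : ℂ) * Complex.I_sq
  have hπ : ((Real.sqrt π : ℝ) : ℂ) ≠ 0 := by
    exact_mod_cast Real.sqrt_ne_zero'.2 pi_pos
  have hs2 : HasSum (fun n : ℕ => (Real.sqrt π : ℂ)
      * (((hermiteP n).eval x : ℝ) * w ^ n / n.factorial))
      ((Real.sqrt π : ℂ) * Complex.exp (2 * x * w - w ^ 2)) := by
    rw [← hts]
    exact HasSum.congr_fun hs fun n => (hfn n).symm
  exact (hasSum_mul_left_iff hπ).mp hs2

lemma integrable_K (c b : ℝ) (hb1 : b < 1) :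
    Integrable fun t : ℝ => rexp (b * (|c| + |t|) ^ 2 - t ^ 2) := by
  refine (integrable_exp_abs_sub_sq' (b * c ^ 2) (2 * b * |c|) (1 - b) (by linarith)).congr ?_
  filter_upwards with t
  congr 1
  rw [add_sq, _root_.sq_abs, _root_.sq_abs]
  ring

lemma nested_bound (y : ℝ) (b : ℝ) (hb0 : 0 ≤ b) (hb1 : b < 1) (u : ℝ) (hu : 0 ≤ u) (N : ℕ) :
    ∑ n ∈ range N, (2 * b * u) ^ n / n.factorial * AR y n
      ≤ rexp (b * u ^ 2) * ∫ t : ℝ, rexp (b * (|y| + |t|) ^ 2 - t ^ 2) := by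
  have hKy := integrable_K y b hb1
  calc ∑ n ∈ range N, (2 * b * u) ^ n / n.factorial * AR y n
      = ∫ t : ℝ, ∑ n ∈ range N,
          (2 * b * u) ^ n / n.factorial * ((|y| + |t|) ^ n * rexp (-t ^ 2)) := by
        rw [integral_finset_sum _ fun i _ => (integrable_gR y i).const_mul _]
        exact Finset.sum_congr rfl fun i _ => (integral_const_mul _ _).symm
    _ ≤ ∫ t : ℝ, rexp (b * u ^ 2) * rexp (b * (|y| + |t|) ^ 2 - t ^ 2) := by
        refine integral_mono
          (integrable_finset_sum _ fun i _ => (integrable_gR y i).const_mul _)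
          (hKy.const_mul _) fun t => ?_
        have e1 : ∀ n : ℕ, (2 * b * u) ^ n / n.factorial * ((|y| + |t|) ^ n * rexp (-t ^ 2))
            = (2 * b * u * (|y| + |t|)) ^ n / n.factorial * rexp (-t ^ 2) := by
          intro n; simp only [mul_pow]; ring
        simp only [e1]
        rw [← Finset.sum_mul]
        calc (∑ n ∈ range N, (2 * b * u * (|y| + |t|)) ^ n / n.factorial) * rexp (-t ^ 2)
            ≤ rexp (2 * b * u * (|y| + |t|)) * rexp (-t ^ 2) :=
              mul_le_mul_of_nonneg_right
                (Real.sum_le_exp_of_nonneg (by positivity) N) (Real.exp_nonneg _)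
          _ ≤ rexp (b * u ^ 2) * rexp (b * (|y| + |t|) ^ 2 - t ^ 2) := by
              rw [← Real.exp_add, ← Real.exp_add]
              apply Real.exp_le_exp.2
              nlinarith [mul_nonneg hb0 (sq_nonneg (u - (|y| + |t|)))]
    _ = rexp (b * u ^ 2) * ∫ t : ℝ, rexp (b * (|y| + |t|) ^ 2 - t ^ 2) :=
        integral_const_mul _ _

/-- Mehler's formula: for real `x, y` and `|a| < 1`,
`Σ_{n=0}^∞ H_n(x) H_n(y) aⁿ / (2ⁿ n!)
  = (1 − a²)^{-1/2} exp((2xya − (x² + y²)a²)/(1 − a²))`. -/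
theorem mehler_formula (x y a : ℝ) (ha : |a| < 1) :
    HasSum
      (fun n : ℕ =>
        (hermiteP n).eval x * (hermiteP n).eval y * a ^ n / (2 ^ n * (n.factorial : ℝ)))
      ((Real.sqrt (1 - a ^ 2))⁻¹ *
        Real.exp ((2 * x * y * a - (x ^ 2 + y ^ 2) * a ^ 2) / (1 - a ^ 2))) := by
  have haa := abs_lt.mp ha
  have h1a : (0:ℝ) < 1 - a ^ 2 := by nlinarith
  have ha0 : (0:ℝ) ≤ |a| := abs_nonneg a
  have hπ : (0:ℝ) < Real.sqrt π := Real.sqrt_pos.2 pi_pos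
  set f : ℕ → ℝ → ℂ := fun n t =>
    ((hermiteP n).eval x : ℝ) * (a : ℂ) ^ n / n.factorial
      * ((↑y + ↑t * I) ^ n * (rexp (-t ^ 2) : ℂ)) with hf
  have hint : ∀ n, Integrable (f n) := fun n => (integrable_g y n).const_mul _
  have hnorm : ∀ n : ℕ, (∫ t : ℝ, ‖f n t‖)
      ≤ (2 * |a|) ^ n / n.factorial * AR y n * AR x n / Real.sqrt π := by
    intro n
    have step1 : (∫ t : ℝ, ‖f n t‖)
        ≤ |((hermiteP n).eval x)| * |a| ^ n / n.factorial * AR y n := by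
      have : |((hermiteP n).eval x)| * |a| ^ n / n.factorial * AR y n
          = ∫ t : ℝ, |((hermiteP n).eval x)| * |a| ^ n / n.factorial
              * ((|y| + |t|) ^ n * rexp (-t ^ 2)) := (integral_const_mul _ _).symm
      rw [this]
      refine integral_mono (hint n).norm ((integrable_gR y n).const_mul _) fun t => ?_
      have e1 : ‖f n t‖ = |((hermiteP n).eval x)| * |a| ^ n / n.factorial
          * ‖(↑y + ↑t * I) ^ n * (rexp (-t ^ 2) : ℂ)‖ := by
        simp [hf, norm_mul, norm_div, norm_pow, Complex.norm_natCast, Complex.norm_real]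
      rw [e1]
      exact mul_le_mul_of_nonneg_left (norm_yti_pow y t n) (by positivity)
    refine step1.trans ?_
    have hb := hermite_val_bound x n
    have hARy := AR_nonneg y n
    have hARx := AR_nonneg x n
    calc |((hermiteP n).eval x)| * |a| ^ n / n.factorial * AR y n
        ≤ (2 ^ n / Real.sqrt π * AR x n) * |a| ^ n / n.factorial * AR y n := by
          gcongr
      _ = (2 * |a|) ^ n / n.factorial * AR y n * AR x n / Real.sqrt π := by
          rw [mul_pow]; field_simp
  have hsum : Summable fun n : ℕ => ∫ t : ℝ, ‖f n t‖ := by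
    set Kx := ∫ s : ℝ, rexp (|a| * (|x| + |s|) ^ 2 - s ^ 2) with hKx
    set Ky := ∫ t : ℝ, rexp (|a| * (|y| + |t|) ^ 2 - t ^ 2) with hKy
    have hKy0 : 0 ≤ Ky := integral_nonneg fun t => Real.exp_nonneg _
    refine summable_of_sum_range_le (c := Kx * Ky / Real.sqrt π)
      (fun n => integral_nonneg fun t => norm_nonneg _) fun N => ?_
    have step2 : ∑ n ∈ range N, (2 * |a|) ^ n / n.factorial * AR y n * AR x n ≤ Kx * Ky := by
      calc ∑ n ∈ range N, (2 * |a|) ^ n / n.factorial * AR y n * AR x n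
          = ∫ s : ℝ, ∑ n ∈ range N, (2 * |a|) ^ n / n.factorial * AR y n
              * ((|x| + |s|) ^ n * rexp (-s ^ 2)) := by
            rw [integral_finset_sum _ fun i _ => (integrable_gR x i).const_mul _]
            exact Finset.sum_congr rfl fun i _ => (integral_const_mul _ _).symm
        _ ≤ ∫ s : ℝ, Ky * rexp (|a| * (|x| + |s|) ^ 2 - s ^ 2) := by
            refine integral_mono
              (integrable_finset_sum _ fun i _ => (integrable_gR x i).const_mul _)
              ((integrable_K x |a| ha).const_mul _) fun s => ?_
            have e2 : ∀ n : ℕ, (2 * |a|) ^ n / n.factorial * AR y n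
                * ((|x| + |s|) ^ n * rexp (-s ^ 2))
                = (2 * |a| * (|x| + |s|)) ^ n / n.factorial * AR y n * rexp (-s ^ 2) := by
              intro n; simp only [mul_pow]; ring
            simp only [e2]
            rw [← Finset.sum_mul]
            calc (∑ n ∈ range N, (2 * |a| * (|x| + |s|)) ^ n / n.factorial * AR y n)
                  * rexp (-s ^ 2)
                ≤ (rexp (|a| * (|x| + |s|) ^ 2) * Ky) * rexp (-s ^ 2) :=
                  mul_le_mul_of_nonneg_right
                    (nested_bound y |a| ha0 ha (|x| + |s|) (by positivity) N)
                    (Real.exp_nonneg _)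
              _ = Ky * rexp (|a| * (|x| + |s|) ^ 2 - s ^ 2) := by
                  rw [mul_comm (rexp (|a| * (|x| + |s|) ^ 2)) Ky, mul_assoc, ← Real.exp_add]
                  ring_nf
        _ = Ky * Kx := integral_const_mul _ _
        _ = Kx * Ky := mul_comm _ _
    calc ∑ n ∈ range N, ∫ t : ℝ, ‖f n t‖
        ≤ ∑ n ∈ range N, (2 * |a|) ^ n / n.factorial * AR y n * AR x n / Real.sqrt π :=
          Finset.sum_le_sum fun i _ => hnorm i
      _ = (∑ n ∈ range N, (2 * |a|) ^ n / n.factorial * AR y n * AR x n) / Real.sqrt π := by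
          rw [← Finset.sum_div]
      _ ≤ Kx * Ky / Real.sqrt π := by
          exact div_le_div_of_nonneg_right step2 hπ.le
  have hs := hasSum_integral_of_summable_integral_norm hint hsum
  have hfn : ∀ n : ℕ, (∫ t : ℝ, f n t)
      = (Real.sqrt π : ℂ) * ((((hermiteP n).eval x * (hermiteP n).eval y * a ^ n
          / (2 ^ n * (n.factorial : ℝ))) : ℝ) : ℂ) := by
    intro n
    rw [hf]
    simp only
    rw [integral_const_mul]
    have hgi : (∫ t : ℝ, (↑y + ↑t * I) ^ n * (rexp (-t ^ 2) : ℂ)) = gI y n := rfl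
    rw [hgi, gI_eq y n]
    have h2 : ((2 : ℂ)) ^ n ≠ 0 := pow_ne_zero _ two_ne_zero
    have h3 : ((n.factorial : ℂ)) ≠ 0 := by
      exact_mod_cast Nat.cast_ne_zero.2 n.factorial_ne_zero
    push_cast
    field_simp
  have hts : (∫ t : ℝ, ∑' n : ℕ, f n t)
      = (Real.sqrt π : ℂ) * (((Real.sqrt (1 - a ^ 2))⁻¹ *
          Real.exp ((2 * x * y * a - (x ^ 2 + y ^ 2) * a ^ 2) / (1 - a ^ 2)) : ℝ) : ℂ) := by
    have hpt : ∀ t : ℝ, (∑' n : ℕ, f n t)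
        = Complex.exp (((a : ℂ) ^ 2 - 1) * (t:ℂ) ^ 2
            + (((2 * a * (x - a * y) : ℝ)) : ℂ) * I * (t:ℂ)
            + (((2 * a * x * y - a ^ 2 * y ^ 2 : ℝ)) : ℂ)) := by
      intro t
      have h1 := (hermite_gen x ((a : ℂ) * (↑y + ↑t * I))).mul_right ((rexp (-t ^ 2) : ℝ) : ℂ)
      have h2 : ∀ n : ℕ, ((hermiteP n).eval x : ℝ) * ((a : ℂ) * (↑y + ↑t * I)) ^ n
            / n.factorial * ((rexp (-t ^ 2) : ℝ) : ℂ) = f n t := by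
        intro n
        rw [hf]
        simp only [mul_pow]
        ring
      have h3 : HasSum (fun n => f n t)
          (Complex.exp (2 * x * ((a : ℂ) * (↑y + ↑t * I)) - ((a : ℂ) * (↑y + ↑t * I)) ^ 2)
            * ((rexp (-t ^ 2) : ℝ) : ℂ)) := by
        simpa only [h2] using h1
      rw [h3.tsum_eq, Complex.ofReal_exp, ← Complex.exp_add]
      congr 1
      push_cast
      linear_combination (-((a:ℂ) ^ 2 * (t:ℂ) ^ 2)) * Complex.I_sq
    rw [integral_congr_ae (Filter.Eventually.of_forall hpt)]
    have hb : ((a : ℂ) ^ 2 - 1).re < 0 := by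
      have : ((a : ℂ) ^ 2 - 1) = (((a ^ 2 - 1 : ℝ)) : ℂ) := by push_cast; ring
      rw [this, Complex.ofReal_re]
      linarith
    rw [integral_cexp_quadratic hb]
    have hpre : ((π : ℂ) / -((a : ℂ) ^ 2 - 1)) ^ ((1:ℂ)/2)
        = ((Real.sqrt π / Real.sqrt (1 - a ^ 2) : ℝ) : ℂ) := by
      have e1 : ((π : ℂ) / -((a : ℂ) ^ 2 - 1)) = (((π / (1 - a ^ 2) : ℝ)) : ℂ) := by
        push_cast; ring
      rw [e1, ← Real.sqrt_div pi_pos.le, Real.sqrt_eq_rpow,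
        Complex.ofReal_cpow (by positivity)]
      norm_num
    rw [show ((1:ℂ)/2) = (1/2 : ℂ) from rfl] at hpre
    rw [hpre]
    have hexp : ((((2 * a * x * y - a ^ 2 * y ^ 2 : ℝ)) : ℂ)
        - ((((2 * a * (x - a * y) : ℝ)) : ℂ) * I) ^ 2 / (4 * ((a : ℂ) ^ 2 - 1)))
        = (((2 * x * y * a - (x ^ 2 + y ^ 2) * a ^ 2) / (1 - a ^ 2) : ℝ) : ℂ) := by
      have hI2 : ((((2 * a * (x - a * y) : ℝ)) : ℂ) * I) ^ 2
          = -((((2 * a * (x - a * y)) ^ 2 : ℝ)) : ℂ) := by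
        push_cast
        linear_combination ((2 * (a:ℂ) * ((x:ℂ) - (a:ℂ) * (y:ℂ))) ^ 2) * Complex.I_sq
      rw [hI2]
      have hne : ((a : ℂ) ^ 2 - 1) ≠ 0 := by
        intro h
        have : ((a : ℂ) ^ 2 - 1).re = 0 := by rw [h]; rfl
        rw [show ((a : ℂ) ^ 2 - 1) = (((a ^ 2 - 1 : ℝ)) : ℂ) from by push_cast; ring,
          Complex.ofReal_re] at this
        linarith
      push_cast
      have hne3 : (1 : ℂ) - (a:ℂ) ^ 2 ≠ 0 := by exact_mod_cast ne_of_gt h1a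
      field_simp [hne3]
      ring
    rw [hexp]
    rw [← Complex.ofReal_exp, ← Complex.ofReal_mul, ← Complex.ofReal_mul]
    congr 1
    ring
  have hπc : ((Real.sqrt π : ℝ) : ℂ) ≠ 0 := by
    exact_mod_cast Real.sqrt_ne_zero'.2 pi_pos
  have hs2 : HasSum (fun n : ℕ => (Real.sqrt π : ℂ)
      * ((((hermiteP n).eval x * (hermiteP n).eval y * a ^ n
          / (2 ^ n * (n.factorial : ℝ))) : ℝ) : ℂ))
      ((Real.sqrt π : ℂ) * (((Real.sqrt (1 - a ^ 2))⁻¹ *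
          Real.exp ((2 * x * y * a - (x ^ 2 + y ^ 2) * a ^ 2) / (1 - a ^ 2)) : ℝ) : ℂ)) := by
    rw [← hts]
    exact HasSum.congr_fun hs fun n => (hfn n).symm
  have hs3 := (hasSum_mul_left_iff hπc).mp hs2
  exact Complex.hasSum_ofReal.mp hs3
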